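/- Strict inequality in the interior: if u is a positive solution of u = g_α ∗ u^β and u(x) ≥ u_{λ₀}(x) on Σ_{λ₀} with the set {x ∈ Σ_{λ₀} : u(x) > u_{λ₀}(x)} of positive measure, then u(x) > u_{λ₀}(x) for every x in the interior of Σ_{λ₀} (i.e. with x₁ > λ₀). -/

import Mathlib

open MeasureTheory Real

noncomputable def besselKernel (n : ℕ) (α : ℝ) (x : EuclideanSpace ℝ (Fin n)) : ℝ :=
  (1 / ((4 * Real.pi) ^ (α / 2) * Real.Gamma (α / 2))) *
    ∫ δ in Set.Ioi (0 : ℝ),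
      Real.exp (-Real.pi * ‖x‖ ^ 2 / δ) * Real.exp (-δ / (4 * Real.pi)) *
        δ ^ ((-(n : ℝ) + α) / 2 - 1)

noncomputable def reflect (n : ℕ) [NeZero n] (l : ℝ) (x : EuclideanSpace ℝ (Fin n)) :
    EuclideanSpace ℝ (Fin n) :=
  WithLp.toLp 2 (Function.update x 0 (2 * l - x 0))

variable {n : ℕ} [NeZero n] {l : ℝ}

/-- The coordinate-negation linear isometry. -/
noncomputable def negFirst (n : ℕ) [NeZero n] :
    EuclideanSpace ℝ (Fin n) ≃ₗᵢ[ℝ] EuclideanSpace ℝ (Fin n) :=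
  LinearIsometryEquiv.piLpCongrRight 2
    (fun i : Fin n => if i = 0 then LinearIsometryEquiv.neg ℝ else LinearIsometryEquiv.refl ℝ ℝ)

lemma negFirst_apply (x : EuclideanSpace ℝ (Fin n)) (i : Fin n) :
    negFirst n x i = if i = 0 then -(x i) else x i := by
  simp [negFirst, LinearIsometryEquiv.piLpCongrRight]
  split <;> simp

lemma reflect_eq (x : EuclideanSpace ℝ (Fin n)) :
    reflect n l x = negFirst n x + EuclideanSpace.single 0 (2 * l) := by
  ext i
  by_cases h : i = 0 <;>
    simp [reflect, negFirst_apply, h, Function.update, EuclideanSpace.single_apply,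
      PiLp.add_apply, sub_eq_add_neg, add_comm]

lemma reflect_zero_coord (x : EuclideanSpace ℝ (Fin n)) : reflect n l x 0 = 2 * l - x 0 := by
  simp [reflect]

lemma reflect_reflect (x : EuclideanSpace ℝ (Fin n)) : reflect n l (reflect n l x) = x := by
  ext i
  by_cases h : i = 0 <;> simp [reflect, Function.update, h]

lemma measurePreserving_reflect : MeasurePreserving (reflect n l) volume volume := by
  have h1 := (negFirst n).measurePreserving
  have h2 := measurePreserving_add_right (volume : Measure (EuclideanSpace ℝ (Fin n)))
      (EuclideanSpace.single 0 (2 * l))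
  have := h2.comp h1
  have hfun : (reflect n l) = (fun x => x + EuclideanSpace.single 0 (2 * l)) ∘ negFirst n :=
    funext fun x => reflect_eq x
  rw [hfun]; exact this

lemma norm_sq_eq (z : EuclideanSpace ℝ (Fin n)) : ‖z‖ ^ 2 = ∑ i, (z i) ^ 2 := by
  rw [EuclideanSpace.norm_eq, Real.sq_sqrt (by positivity)]
  simp [Real.norm_eq_abs, sq_abs]

lemma norm_sub_reflect_sq (x y : EuclideanSpace ℝ (Fin n)) :
    ‖x - reflect n l y‖ ^ 2 = ‖x - y‖ ^ 2 + 4 * (x 0 - l) * (y 0 - l) := by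
  rw [norm_sq_eq, norm_sq_eq]
  have hx : ∀ i, (x - reflect n l y) i = x i - reflect n l y i := fun i => rfl
  have hy : ∀ i, (x - y) i = x i - y i := fun i => rfl
  simp only [hx, hy]
  rw [← Finset.add_sum_erase _ _ (Finset.mem_univ (0 : Fin n)),
      ← Finset.add_sum_erase _ (fun i => (x i - y i) ^ 2) (Finset.mem_univ (0 : Fin n))]
  have herase : ∑ i ∈ Finset.univ.erase (0 : Fin n), (x i - reflect n l y i) ^ 2
      = ∑ i ∈ Finset.univ.erase (0 : Fin n), (x i - y i) ^ 2 := by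
    refine Finset.sum_congr rfl (fun i hi => ?_)
    have hi0 : i ≠ 0 := (Finset.mem_erase.mp hi).1
    rw [show reflect n l y i = y i from by simp [reflect, Function.update, hi0]]
  rw [herase, reflect_zero_coord]
  ring

lemma norm_reflect_sub_reflect (x y : EuclideanSpace ℝ (Fin n)) :
    ‖reflect n l x - reflect n l y‖ = ‖x - y‖ := by
  have : reflect n l x - reflect n l y = negFirst n (x - y) := by
    rw [reflect_eq, reflect_eq]
    simp [map_sub]
  rw [this, (negFirst n).norm_map]

lemma norm_sub_reflect_comm (x y : EuclideanSpace ℝ (Fin n)) :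
    ‖x - reflect n l y‖ = ‖reflect n l x - y‖ := by
  conv_rhs => rw [show y = reflect n l (reflect n l y) from (reflect_reflect y).symm,
    norm_reflect_sub_reflect]

lemma norm_sub_le_reflect {x y : EuclideanSpace ℝ (Fin n)} (hx : l ≤ x 0) (hy : l ≤ y 0) :
    ‖x - y‖ ≤ ‖x - reflect n l y‖ := by
  have h := norm_sub_reflect_sq (l := l) x y
  nlinarith [norm_nonneg (x - y), norm_nonneg (x - reflect n l y), sub_nonneg.mpr hx,
    sub_nonneg.mpr hy]

lemma norm_sub_lt_reflect {x y : EuclideanSpace ℝ (Fin n)} (hx : l < x 0) (hy : l < y 0) :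
    ‖x - y‖ < ‖x - reflect n l y‖ := by
  have h := norm_sub_reflect_sq (l := l) x y
  nlinarith [norm_nonneg (x - y), norm_nonneg (x - reflect n l y), sub_pos.mpr hx,
    sub_pos.mpr hy]
noncomputable def bpsi (p r δ : ℝ) : ℝ :=
  Real.exp (-Real.pi * r ^ 2 / δ) * Real.exp (-δ / (4 * Real.pi)) * δ ^ p

lemma bpsi_measurable (p r : ℝ) : Measurable (bpsi p r) := by
  unfold bpsi
  exact ((Real.measurable_exp.comp (measurable_const.div measurable_id)).mul
    (Real.measurable_exp.comp (measurable_id.neg.div measurable_const))).mul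
    (measurable_id.pow_const p)

lemma bpsi_pos {p r δ : ℝ} (hδ : 0 < δ) : 0 < bpsi p r δ := by
  unfold bpsi; positivity

lemma bpsi_integrableOn (p : ℝ) {r : ℝ} (hr : 0 < r) :
    IntegrableOn (bpsi p r) (Set.Ioi 0) := by
  have hc : (0:ℝ) < Real.pi * r ^ 2 := by positivity
  set c : ℝ := Real.pi * r ^ 2 with hcdef
  have hbpsi : ∀ δ : ℝ, bpsi p r δ
      = Real.exp (-c / δ) * Real.exp (-δ / (4 * Real.pi)) * δ ^ p := by
    intro δ
    unfold bpsi
    rw [show -Real.pi * r ^ 2 / δ = -c / δ by rw [hcdef]; ring]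
  rw [← Set.Ioc_union_Ioi_eq_Ioi (le_of_lt one_pos)]
  refine IntegrableOn.union ?_ ?_
  · -- on (0, 1]
    set m : ℕ := ⌈-p⌉₊ with hm
    have hmp : (0:ℝ) ≤ (m:ℝ) + p := by
      have := Nat.le_ceil (-p); linarith
    refine Integrable.mono' (g := fun _ => (m.factorial : ℝ) / c ^ m)
      (integrableOn_const measure_Ioc_lt_top.ne)
      ((bpsi_measurable p r).aestronglyMeasurable) ?_
    refine (ae_restrict_iff' measurableSet_Ioc).2 (Filter.Eventually.of_forall ?_)
    intro δ hδ
    obtain ⟨hδ0, hδ1⟩ := hδ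
    rw [Real.norm_eq_abs, abs_of_pos (bpsi_pos hδ0), hbpsi]
    have hexp : Real.exp (-c / δ) ≤ (m.factorial : ℝ) * δ ^ m / c ^ m := by
      have h1 : (c / δ) ^ m / (m.factorial : ℝ) ≤ Real.exp (c / δ) := by
        calc (c / δ) ^ m / (m.factorial : ℝ)
            ≤ ∑ i ∈ Finset.range (m + 1), (c / δ) ^ i / (i.factorial : ℝ) :=
              Finset.single_le_sum (f := fun i => (c / δ) ^ i / (i.factorial : ℝ))
                (fun i _ => by positivity) (Finset.self_mem_range_succ m)
          _ ≤ Real.exp (c / δ) := Real.sum_le_exp_of_nonneg (by positivity) _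
      have h2 : Real.exp (-c / δ) = (Real.exp (c / δ))⁻¹ := by
        rw [← Real.exp_neg]; ring_nf
      rw [h2]
      have h3 : 0 < (c / δ) ^ m / (m.factorial : ℝ) := by positivity
      calc (Real.exp (c / δ))⁻¹ ≤ ((c / δ) ^ m / (m.factorial : ℝ))⁻¹ := inv_anti₀ h3 h1
        _ = (m.factorial : ℝ) * δ ^ m / c ^ m := by
            rw [div_pow]; field_simp
    have hexp2 : Real.exp (-δ / (4 * Real.pi)) ≤ 1 := by
      rw [← Real.exp_zero]
      refine Real.exp_le_exp.2 ?_
      rw [neg_div]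
      exact neg_nonpos.2 (div_nonneg hδ0.le (by positivity))
    have hδp : (0:ℝ) ≤ δ ^ p := Real.rpow_nonneg (le_of_lt hδ0) p
    calc Real.exp (-c / δ) * Real.exp (-δ / (4 * Real.pi)) * δ ^ p
        ≤ Real.exp (-c / δ) * 1 * δ ^ p :=
          mul_le_mul_of_nonneg_right
            (mul_le_mul_of_nonneg_left hexp2 (le_of_lt (Real.exp_pos _))) hδp
      _ = Real.exp (-c / δ) * δ ^ p := by ring
      _ ≤ ((m.factorial : ℝ) * δ ^ m / c ^ m) * δ ^ p :=
          mul_le_mul_of_nonneg_right hexp hδp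
      _ = ((m.factorial : ℝ) / c ^ m) * (δ ^ (m:ℝ) * δ ^ p) := by
          rw [Real.rpow_natCast]; ring
      _ ≤ ((m.factorial : ℝ) / c ^ m) * 1 := by
          rw [← Real.rpow_add hδ0]
          exact mul_le_mul_of_nonneg_left (Real.rpow_le_one (le_of_lt hδ0) hδ1 hmp)
            (by positivity)
      _ = (m.factorial : ℝ) / c ^ m := by ring
  · -- on (1, ∞)
    set q : ℝ := max p 0 with hq
    have hint : IntegrableOn (fun δ : ℝ => δ ^ q * Real.exp (-(1 / (4 * Real.pi)) * δ))
        (Set.Ioi 1) := by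
      have := integrableOn_rpow_mul_exp_neg_mul_rpow (p := 1) (s := q) (b := 1 / (4 * Real.pi))
        (lt_of_lt_of_le neg_one_lt_zero (le_max_right p 0)) one_pos (by positivity)
      simp only [Real.rpow_one] at this
      exact this.mono_set (Set.Ioi_subset_Ioi (le_of_lt one_pos))
    refine Integrable.mono' hint ((bpsi_measurable p r).aestronglyMeasurable) ?_
    refine (ae_restrict_iff' measurableSet_Ioi).2 (Filter.Eventually.of_forall ?_)
    intro δ hδ
    have hδ1 : (1:ℝ) < δ := hδ
    have hδ0 : (0:ℝ) < δ := lt_trans one_pos hδ1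
    rw [Real.norm_eq_abs, abs_of_pos (bpsi_pos hδ0), hbpsi]
    have hexp1 : Real.exp (-c / δ) ≤ 1 := by
      rw [← Real.exp_zero]
      refine Real.exp_le_exp.2 ?_
      rw [neg_div]
      exact neg_nonpos.2 (div_nonneg hc.le hδ0.le)
    have hpq : δ ^ p ≤ δ ^ q :=
      Real.rpow_le_rpow_of_exponent_le (le_of_lt hδ1) (le_max_left p 0)
    calc Real.exp (-c / δ) * Real.exp (-δ / (4 * Real.pi)) * δ ^ p
        ≤ 1 * Real.exp (-δ / (4 * Real.pi)) * δ ^ q :=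
          mul_le_mul (mul_le_mul_of_nonneg_right hexp1 (le_of_lt (Real.exp_pos _)))
            hpq (Real.rpow_nonneg (le_of_lt hδ0) p) (by positivity)
      _ = δ ^ q * Real.exp (-(1 / (4 * Real.pi)) * δ) := by
          rw [one_mul, mul_comm]
          congr 1
          congr 1
          field_simp

lemma bpsi_lt {p r₁ r₂ δ : ℝ} (h1 : 0 ≤ r₁) (h12 : r₁ < r₂) (hδ : 0 < δ) :
    bpsi p r₂ δ < bpsi p r₁ δ := by
  unfold bpsi
  have hsq : r₁ ^ 2 < r₂ ^ 2 := by nlinarith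
  have : -Real.pi * r₂ ^ 2 / δ < -Real.pi * r₁ ^ 2 / δ := by
    apply div_lt_div_of_pos_right _ hδ
    nlinarith [Real.pi_pos]
  have hexp := Real.exp_lt_exp.2 this
  have h1 : (0:ℝ) < Real.exp (-δ / (4 * Real.pi)) := Real.exp_pos _
  have h2 : (0:ℝ) < δ ^ p := Real.rpow_pos_of_pos hδ p
  calc Real.exp (-Real.pi * r₂ ^ 2 / δ) * Real.exp (-δ / (4 * Real.pi)) * δ ^ p
      < Real.exp (-Real.pi * r₁ ^ 2 / δ) * Real.exp (-δ / (4 * Real.pi)) * δ ^ p := by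
        apply mul_lt_mul_of_pos_right _ h2
        exact mul_lt_mul_of_pos_right hexp h1

lemma bpsi_integral_lt (p : ℝ) {r₁ r₂ : ℝ} (h1 : 0 < r₁) (h12 : r₁ < r₂) :
    ∫ δ in Set.Ioi (0:ℝ), bpsi p r₂ δ < ∫ δ in Set.Ioi (0:ℝ), bpsi p r₁ δ := by
  have hi1 := bpsi_integrableOn p h1
  have hi2 := bpsi_integrableOn p (lt_trans h1 h12)
  rw [← sub_pos, ← integral_sub hi1 hi2]
  have hkey : 0 < ∫ δ in Set.Ioi (0:ℝ), (bpsi p r₁ δ - bpsi p r₂ δ) := by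
    refine (setIntegral_pos_iff_support_of_nonneg_ae ?_ (hi1.sub hi2)).2 ?_
    · refine (ae_restrict_iff' measurableSet_Ioi).2 (Filter.Eventually.of_forall ?_)
      intro δ hδ
      exact sub_nonneg.2 (le_of_lt (bpsi_lt h1.le h12 hδ))
    · have hsub : Set.Ioi (0:ℝ) ⊆ Function.support (bpsi p r₁ - bpsi p r₂) ∩ Set.Ioi 0 := by
        intro δ hδ
        refine ⟨?_, hδ⟩
        simp only [Function.mem_support, Pi.sub_apply]
        exact sub_ne_zero.2 (ne_of_gt (bpsi_lt h1.le h12 hδ))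
      calc (0:ENNReal) < volume (Set.Ioi (0:ℝ)) := by simp [Real.volume_Ioi]
        _ ≤ _ := measure_mono hsub
  exact hkey

lemma besselKernel_eq (n : ℕ) (α : ℝ) (x : EuclideanSpace ℝ (Fin n)) :
    besselKernel n α x = (1 / ((4 * Real.pi) ^ (α / 2) * Real.Gamma (α / 2))) *
      ∫ δ in Set.Ioi (0:ℝ), bpsi ((-(n : ℝ) + α) / 2 - 1) ‖x‖ δ := rfl

lemma besselKernel_congr_norm (n : ℕ) (α : ℝ) {a b : EuclideanSpace ℝ (Fin n)}
    (h : ‖a‖ = ‖b‖) : besselKernel n α a = besselKernel n α b := by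
  rw [besselKernel_eq, besselKernel_eq, h]

lemma besselKernel_lt (n : ℕ) {α : ℝ} (hα : 0 < α) {a b : EuclideanSpace ℝ (Fin n)}
    (ha : 0 < ‖a‖) (hab : ‖a‖ < ‖b‖) : besselKernel n α b < besselKernel n α a := by
  rw [besselKernel_eq, besselKernel_eq]
  have hC : 0 < 1 / ((4 * Real.pi) ^ (α / 2) * Real.Gamma (α / 2)) := by
    have h1 : (0:ℝ) < (4 * Real.pi) ^ (α / 2) :=
      Real.rpow_pos_of_pos (by positivity) _
    have h2 : 0 < Real.Gamma (α / 2) := Real.Gamma_pos_of_pos (by linarith)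
    positivity
  exact mul_lt_mul_of_pos_left (bpsi_integral_lt _ ha hab) hC


lemma reflect_continuous (n : ℕ) [NeZero n] (l : ℝ) : Continuous (reflect n l) := by
  have h : (reflect n l : EuclideanSpace ℝ (Fin n) → EuclideanSpace ℝ (Fin n))
      = fun x => negFirst n x + EuclideanSpace.single 0 (2 * l) := funext reflect_eq
  rw [h]
  exact (negFirst n).continuous.add continuous_const

noncomputable def reflectHomeo (n : ℕ) [NeZero n] (l : ℝ) :
    EuclideanSpace ℝ (Fin n) ≃ₜ EuclideanSpace ℝ (Fin n) where
  toFun := reflect n l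
  invFun := reflect n l
  left_inv := reflect_reflect
  right_inv := reflect_reflect
  continuous_toFun := reflect_continuous n l
  continuous_invFun := reflect_continuous n l

lemma reflect_measurableEmbedding (n : ℕ) [NeZero n] (l : ℝ) :
    MeasurableEmbedding (reflect n l) :=
  (reflectHomeo n l).toMeasurableEquiv.measurableEmbedding

lemma coord_measurable (n : ℕ) [NeZero n] :
    Measurable (fun y : EuclideanSpace ℝ (Fin n) => y 0) :=
  (measurable_pi_apply (0 : Fin n)).comp (MeasurableEquiv.toLp 2 (Fin n → ℝ)).symm.measurable

lemma volume_hyperplane (n : ℕ) [NeZero n] (l : ℝ) :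
    volume {y : EuclideanSpace ℝ (Fin n) | y 0 = l} = 0 := by
  have hmp := EuclideanSpace.volume_preserving_symm_measurableEquiv_toLp (Fin n)
  have hs : MeasurableSet {f : Fin n → ℝ | f 0 = l} := by
    have : {f : Fin n → ℝ | f 0 = l} = (fun f : Fin n → ℝ => f 0) ⁻¹' {l} := by
      ext f; simp
    rw [this]
    exact (measurable_pi_apply (0 : Fin n)) (measurableSet_singleton l)
  have h1 : {y : EuclideanSpace ℝ (Fin n) | y 0 = l}
      = (MeasurableEquiv.toLp 2 (Fin n → ℝ)).symm ⁻¹' {f | f 0 = l} := rfl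
  rw [h1, hmp.measure_preimage hs.nullMeasurableSet]
  have h2 : {f : Fin n → ℝ | f 0 = l}
      = Set.univ.pi (fun i : Fin n => if i = (0 : Fin n) then {l} else Set.univ) := by
    ext f
    simp only [Set.mem_setOf_eq, Set.mem_pi, Set.mem_univ, forall_true_left]
    constructor
    · intro h i
      by_cases hi : i = 0 <;> simp [hi, h]
    · intro h
      have := h 0
      simpa using this
  rw [h2, volume_pi, Measure.pi_pi]
  refine Finset.prod_eq_zero (Finset.mem_univ (0 : Fin n)) ?_
  simp

lemma volume_singleton_euclidean (n : ℕ) [NeZero n] (x : EuclideanSpace ℝ (Fin n)) :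
    volume ({x} : Set (EuclideanSpace ℝ (Fin n))) = 0 := by
  haveI : Nontrivial (EuclideanSpace ℝ (Fin n)) :=
    ⟨⟨0, EuclideanSpace.single 0 1, fun h => by
      have := congrArg (fun v => v 0) h.symm
      simp [EuclideanSpace.single_apply] at this⟩⟩
  exact measure_singleton x

theorem strict_inequality_interior (n : ℕ) [NeZero n] (hn : 1 ≤ n)
    (α β : ℝ) (hα : 0 < α) (hβ : 1 < β)
    (u : EuclideanSpace ℝ (Fin n) → ℝ) (hupos : ∀ x, 0 < u x) (hucont : Continuous u)
    (heq : ∀ x, u x = ∫ y, besselKernel n α (x - y) * u y ^ β)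
    (l₀ : ℝ)
    (hge : ∀ x : EuclideanSpace ℝ (Fin n), l₀ ≤ x 0 → u (reflect n l₀ x) ≤ u x)
    (hpos : 0 < volume {x : EuclideanSpace ℝ (Fin n) | l₀ ≤ x 0 ∧ u (reflect n l₀ x) < u x}) :
    ∀ x : EuclideanSpace ℝ (Fin n), l₀ < x 0 → u (reflect n l₀ x) < u x := by
  intro x hx
  classical
  set R : EuclideanSpace ℝ (Fin n) → EuclideanSpace ℝ (Fin n) := reflect n l₀ with hRdef
  set xr : EuclideanSpace ℝ (Fin n) := R x with hxrdef
  have hβ0 : (0:ℝ) < β := lt_trans one_pos hβ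
  -- integrability of the basic convolution integrand
  have hint : ∀ z : EuclideanSpace ℝ (Fin n), Integrable (fun y => besselKernel n α (z - y) * u y ^ β) := by
    intro z
    by_contra h
    have h0 := integral_undef h
    have : u z = 0 := (heq z).trans h0
    exact (hupos z).ne' this
  have hRmp : MeasurePreserving R volume volume := measurePreserving_reflect
  have hRemb : MeasurableEmbedding R := reflect_measurableEmbedding n l₀
  -- norm identities
  have hnorm1 : ∀ y : EuclideanSpace ℝ (Fin n), ‖x - R y‖ = ‖xr - y‖ := fun y => norm_sub_reflect_comm x y
  have hnorm2 : ∀ y : EuclideanSpace ℝ (Fin n), ‖xr - R y‖ = ‖x - y‖ := fun y => norm_reflect_sub_reflect x y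
  -- the four integrable functions
  have h1 : Integrable (fun y => besselKernel n α (x - y) * u y ^ β) := hint x
  have h2 : Integrable (fun y => besselKernel n α (xr - y) * u y ^ β) := hint xr
  have h3 : Integrable (fun y => besselKernel n α (xr - y) * u (R y) ^ β) := by
    have hcomp := (hRmp.integrable_comp_emb hRemb).2 h1
    refine hcomp.congr (Filter.Eventually.of_forall (fun y => ?_))
    show besselKernel n α (x - R y) * u (R y) ^ β = _
    rw [besselKernel_congr_norm n α (hnorm1 y)]
  have h4 : Integrable (fun y => besselKernel n α (x - y) * u (R y) ^ β) := by
    have hcomp := (hRmp.integrable_comp_emb hRemb).2 h2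
    refine hcomp.congr (Filter.Eventually.of_forall (fun y => ?_))
    show besselKernel n α (xr - R y) * u (R y) ^ β = _
    rw [besselKernel_congr_norm n α (hnorm2 y)]
  -- sets
  set S : Set (EuclideanSpace ℝ (Fin n)) := {y : EuclideanSpace ℝ (Fin n) | l₀ < y 0} with hSdef
  have hSmeas : MeasurableSet S := by
    have : S = (fun y : EuclideanSpace ℝ (Fin n) => y 0) ⁻¹' Set.Ioi l₀ := by ext y; simp [hSdef]
    rw [this]
    exact coord_measurable n measurableSet_Ioi
  have hH : volume {y : EuclideanSpace ℝ (Fin n) | y 0 = l₀} = 0 := volume_hyperplane n l₀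
  -- the difference integrand
  set D : EuclideanSpace ℝ (Fin n) → ℝ := fun y => besselKernel n α (x - y) * u y ^ β
    - besselKernel n α (xr - y) * u y ^ β with hDdef
  have hD : Integrable D := h1.sub h2
  have hA : u x - u xr = ∫ y, D y := by
    rw [heq x, heq xr, ← integral_sub h1 h2]
  have hB : ∫ y, D y = (∫ y in S, D y) + ∫ y in Sᶜ, D y :=
    (integral_add_compl hSmeas hD).symm
  -- reflect the integral over the complement
  set D₂ : EuclideanSpace ℝ (Fin n) → ℝ := fun y => besselKernel n α (xr - y) * u (R y) ^ β
    - besselKernel n α (x - y) * u (R y) ^ β with hD₂def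
  have hD₂ : Integrable D₂ := h3.sub h4
  have hC : ∫ y in Sᶜ, D y = ∫ y in S, D₂ y := by
    have hBae : (Sᶜ : Set (EuclideanSpace ℝ (Fin n))) =ᵐ[volume] {y : EuclideanSpace ℝ (Fin n) | y 0 < l₀} := by
      rw [MeasureTheory.ae_eq_set]
      constructor
      · refine measure_mono_null (fun y hy => ?_) hH
        obtain ⟨hy1, hy2⟩ := hy
        simp only [Set.mem_compl_iff, hSdef, Set.mem_setOf_eq, not_lt] at hy1
        simp only [Set.mem_setOf_eq, not_lt] at hy2
        exact le_antisymm hy1 hy2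
      · refine measure_mono_null (fun y hy => ?_) hH
        obtain ⟨hy1, hy2⟩ := hy
        simp only [Set.mem_compl_iff, hSdef, Set.mem_setOf_eq, not_not] at hy2
        simp only [Set.mem_setOf_eq] at hy1
        exact absurd hy2 (not_lt.2 hy1.le)
    rw [setIntegral_congr_set hBae]
    have hpre : R ⁻¹' {y : EuclideanSpace ℝ (Fin n) | y 0 < l₀} = S := by
      ext y
      simp only [Set.mem_preimage, Set.mem_setOf_eq, hSdef, hRdef, reflect_zero_coord]
      constructor <;> intro h <;> linarith
    rw [show ∫ y in {y : EuclideanSpace ℝ (Fin n) | y 0 < l₀}, D y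
        = ∫ y in R ⁻¹' {y : EuclideanSpace ℝ (Fin n) | y 0 < l₀}, D (R y) from
      (hRmp.setIntegral_preimage_emb hRemb D _).symm, hpre]
    refine setIntegral_congr_fun hSmeas (fun y _ => ?_)
    show D (R y) = D₂ y
    simp only [hDdef, hD₂def]
    rw [besselKernel_congr_norm n α (hnorm1 y), besselKernel_congr_norm n α (hnorm2 y)]
  -- the symmetrized integrand
  set W : EuclideanSpace ℝ (Fin n) → ℝ := fun y => (besselKernel n α (x - y) - besselKernel n α (xr - y))
    * (u y ^ β - u (R y) ^ β) with hWdef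
  have hsum : (∫ y in S, D y) + ∫ y in S, D₂ y = ∫ y in S, W y := by
    rw [← integral_add hD.integrableOn hD₂.integrableOn]
    refine setIntegral_congr_fun hSmeas (fun y _ => ?_)
    simp only [hDdef, hD₂def, hWdef]
    ring
  have hfinal : u x - u xr = ∫ y in S, W y := by
    rw [hA, hB, hC, hsum]
  -- strict positivity
  have hxnull : volume ({x} : Set (EuclideanSpace ℝ (Fin n))) = 0 := volume_singleton_euclidean n x
  have hWnonneg : 0 ≤ᵐ[volume.restrict S] W := by
    have key : ∀ᵐ y ∂volume.restrict S, 0 ≤ W y := by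
      rw [ae_restrict_iff' hSmeas]
      refine Filter.eventually_of_mem (compl_mem_ae_iff.2 hxnull) (fun y hy hyS => ?_)
      have hyx : y ≠ x := hy
      have hyS' : l₀ < y 0 := hyS
      have hn0 : 0 < ‖x - y‖ := by
        rw [norm_pos_iff]
        exact sub_ne_zero.2 (Ne.symm hyx)
      have hlt : ‖x - y‖ < ‖xr - y‖ := by
        rw [← hnorm1 y]
        exact norm_sub_lt_reflect hx hyS'
      have hfac1 : 0 < besselKernel n α (x - y) - besselKernel n α (xr - y) :=
        sub_pos.2 (besselKernel_lt n hα hn0 hlt)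
      have hfac2 : 0 ≤ u y ^ β - u (R y) ^ β :=
        sub_nonneg.2 (Real.rpow_le_rpow (hupos _).le (hge y hyS'.le) hβ0.le)
      exact mul_nonneg hfac1.le hfac2
    exact key
  have hWint : IntegrableOn W S := by
    refine (((h1.sub h2).sub h4).add h3).integrableOn.congr_fun (fun y _ => ?_) hSmeas
    simp only [hWdef, Pi.add_apply, Pi.sub_apply]
    ring
  have hsupp : 0 < volume (Function.support W ∩ S) := by
    set P : Set (EuclideanSpace ℝ (Fin n)) := {y : EuclideanSpace ℝ (Fin n) | l₀ ≤ y 0 ∧ u (R y) < u y} with hPdef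
    have hPsub : P \ ({y : EuclideanSpace ℝ (Fin n) | y 0 = l₀} ∪ {x}) ⊆ Function.support W ∩ S := by
      rintro y ⟨⟨hy1, hy2⟩, hy3⟩
      simp only [Set.mem_union, Set.mem_setOf_eq, Set.mem_singleton_iff, not_or] at hy3
      obtain ⟨hy4, hy5⟩ := hy3
      have hyS' : l₀ < y 0 := lt_of_le_of_ne hy1 (Ne.symm hy4)
      refine ⟨?_, hyS'⟩
      have hn0 : 0 < ‖x - y‖ := by
        rw [norm_pos_iff]
        exact sub_ne_zero.2 (Ne.symm hy5)
      have hlt : ‖x - y‖ < ‖xr - y‖ := by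
        rw [← hnorm1 y]
        exact norm_sub_lt_reflect hx hyS'
      have hfac1 : 0 < besselKernel n α (x - y) - besselKernel n α (xr - y) :=
        sub_pos.2 (besselKernel_lt n hα hn0 hlt)
      have hfac2 : 0 < u y ^ β - u (R y) ^ β :=
        sub_pos.2 (Real.rpow_lt_rpow (hupos _).le hy2 hβ0)
      simp only [Function.mem_support, hWdef]
      exact ne_of_gt (mul_pos hfac1 hfac2)
    have hnull : volume ({y : EuclideanSpace ℝ (Fin n) | y 0 = l₀} ∪ {x} : Set (EuclideanSpace ℝ (Fin n))) = 0 :=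
      measure_union_null hH hxnull
    calc (0:ENNReal) < volume P := hpos
      _ = volume (P \ ({y : EuclideanSpace ℝ (Fin n) | y 0 = l₀} ∪ {x})) := (measure_diff_null hnull).symm
      _ ≤ volume (Function.support W ∩ S) := measure_mono hPsub
  have hintpos : 0 < ∫ y in S, W y :=
    (setIntegral_pos_iff_support_of_nonneg_ae hWnonneg hWint).2 hsupp
  have : 0 < u x - u xr := by rw [hfinal]; exact hintpos
  linarith
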